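/- Let G be a connected signed graph with |E_N(G)| = ε_N(G). Then the unsigned graph G − E_N(G) obtained by deleting all negative edges is connected; consequently |E(G)| ≥ ε_N(G) + |V(G)| − 1. -/

import Mathlib

open scoped Classical

noncomputable section

/-- A signed (multi)graph: a finite multigraph (loops and multiple edges allowed)
together with a sign on each edge (`neg e = true` means `e` is negative). -/
structure SignedMultigraph where
  V : Type
  E : Type
  [fintypeV : Fintype V]
  [fintypeE : Fintype E]
  ends : E → Sym2 V
  neg : E → Bool

attribute [instance] SignedMultigraph.fintypeV SignedMultigraph.fintypeE

namespace SignedMultigraph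

variable (G : SignedMultigraph)

/-- The vertices incident with at least one edge of `S`. -/
def support (S : Finset G.E) : Finset G.V :=
  Finset.univ.filter fun v => ∃ e ∈ S, v ∈ G.ends e

/-- Degree of `v` in the edge set `S`; loops count twice. -/
def degIn (S : Finset G.E) (v : G.V) : ℕ :=
  ∑ e ∈ S, (if G.ends e = Sym2.diag v then 2 else if v ∈ G.ends e then 1 else 0)

/-- `u` and `v` are joined by an edge of `S`. -/
def Adj (S : Finset G.E) (u v : G.V) : Prop := ∃ e ∈ S, G.ends e = s(u, v)

/-- Reachability using only edges of `S`. -/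
def Reach (S : Finset G.E) : G.V → G.V → Prop := Relation.ReflTransGen (G.Adj S)

/-- The subgraph with edge set `S` (and vertex set its support) is connected. -/
def ConnOn (S : Finset G.E) : Prop :=
  ∀ u ∈ G.support S, ∀ v ∈ G.support S, G.Reach S u v

/-- The whole signed graph is connected. -/
def Connected : Prop := Nonempty G.V ∧ ∀ u v : G.V, G.Reach Finset.univ u v

/-- The negative edges among `S`. -/
def negEdges (S : Finset G.E) : Finset G.E := S.filter fun e => G.neg e = true

/-- A circuit: a (nonempty) connected 2-regular subgraph, given by its edge set. -/
def IsCircuit (S : Finset G.E) : Prop :=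
  S.Nonempty ∧ G.ConnOn S ∧ ∀ v ∈ G.support S, G.degIn S v = 2

/-- A balanced circuit: a circuit with an even number of negative edges. -/
def IsBalancedCircuit (S : Finset G.E) : Prop :=
  G.IsCircuit S ∧ Even (G.negEdges S).card

/-- An unbalanced circuit: a circuit with an odd number of negative edges. -/
def IsUnbalancedCircuit (S : Finset G.E) : Prop :=
  G.IsCircuit S ∧ ¬ Even (G.negEdges S).card

/-- A short barbell: two unbalanced circuits meeting at exactly one vertex. -/
def IsShortBarbell (S : Finset G.E) : Prop :=
  ∃ C₁ C₂ : Finset G.E, G.IsUnbalancedCircuit C₁ ∧ G.IsUnbalancedCircuit C₂ ∧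
    Disjoint C₁ C₂ ∧ (G.support C₁ ∩ G.support C₂).card = 1 ∧ S = C₁ ∪ C₂

/-- A path with (distinct) ends `u` and `v`, given by its edge set. -/
def IsPath (P : Finset G.E) (u v : G.V) : Prop :=
  P.Nonempty ∧ G.ConnOn P ∧ u ≠ v ∧ u ∈ G.support P ∧ v ∈ G.support P ∧
    G.degIn P u = 1 ∧ G.degIn P v = 1 ∧
    ∀ w ∈ G.support P, w ≠ u → w ≠ v → G.degIn P w = 2

/-- A long barbell: two vertex-disjoint unbalanced circuits joined by a path
meeting the circuits only at its ends. -/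
def IsLongBarbell (S : Finset G.E) : Prop :=
  ∃ (C₁ C₂ P : Finset G.E) (u v : G.V),
    G.IsUnbalancedCircuit C₁ ∧ G.IsUnbalancedCircuit C₂ ∧
    Disjoint (G.support C₁) (G.support C₂) ∧
    G.IsPath P u v ∧
    G.support P ∩ G.support C₁ = {u} ∧ G.support P ∩ G.support C₂ = {v} ∧
    Disjoint P C₁ ∧ Disjoint P C₂ ∧
    S = C₁ ∪ C₂ ∪ P

/-- A signed circuit: a balanced circuit, a short barbell, or a long barbell. -/
def IsSignedCircuit (S : Finset G.E) : Prop :=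
  G.IsBalancedCircuit S ∨ G.IsShortBarbell S ∨ G.IsLongBarbell S

/-- The number of members of the family `F` containing the edge `e`. -/
def coverCount (F : Multiset (Finset G.E)) (e : G.E) : ℕ :=
  (F.filter fun S => e ∈ S).card

/-- The total length of the family `F`. -/
def coverLength (F : Multiset (Finset G.E)) : ℕ := (F.map Finset.card).sum

/-- A signed circuit cover: every edge is in at least one member. -/
def IsSignedCircuitCover (F : Multiset (Finset G.E)) : Prop :=
  (∀ S ∈ F, G.IsSignedCircuit S) ∧ ∀ e : G.E, 1 ≤ G.coverCount F e

/-- The length of a shortest signed circuit cover. -/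
def SCC : ℕ := sInf { n | ∃ F, G.IsSignedCircuitCover F ∧ G.coverLength F = n }

/-- Whether edge `e` has exactly one endpoint in the vertex set `A`. -/
def crossesB (A : Finset G.V) (e : G.E) : Bool :=
  Sym2.lift ⟨fun x y => Bool.xor (decide (x ∈ A)) (decide (y ∈ A)),
    fun x y => Bool.xor_comm _ _⟩ (G.ends e)

/-- Sign of `e` (`true` = negative) after switching at every vertex of `A`. -/
def negAfter (A : Finset G.V) (e : G.E) : Bool :=
  Bool.xor (G.neg e) (G.crossesB A e)

/-- Minimum number of negative edges in `S` over all switchings. -/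
def negOf (S : Finset G.E) : ℕ :=
  sInf { n | ∃ A : Finset G.V, (S.filter fun e => G.negAfter A e = true).card = n }

/-- The negativeness of `G`. -/
def negativeness : ℕ := G.negOf Finset.univ

/-- The edges of `S` with exactly one endpoint in `U`: the edge boundary `δ(U)` inside `S`. -/
def boundary (S : Finset G.E) (U : Finset G.V) : Finset G.E :=
  S.filter fun e => G.crossesB U e = true

/-- `b` is a bridge of the subgraph with edge set `S`. -/
def IsBridge (S : Finset G.E) (b : G.E) : Prop :=
  ∃ U : Finset G.V, G.boundary S U = {b}

/-- The subgraph with edge set `S` is bridgeless. -/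
def Bridgeless (S : Finset G.E) : Prop := ∀ b ∈ S, ¬ G.IsBridge S b

/-- `G` is 2-edge-connected. -/
def TwoEdgeConnected : Prop :=
  G.Connected ∧ ∀ b : G.E, ¬ G.IsBridge Finset.univ b

/-- Edges of `S` lying in the same component (of the subgraph with edge set `S`)
as the vertex `x`. -/
def compEdges (S : Finset G.E) (x : G.V) : Finset G.E :=
  S.filter fun e => ∃ u, u ∈ G.ends e ∧ G.Reach S x u

/-- A g-bridge: a bridge such that both components of `G - b` have even negativeness. -/
def IsGBridge (b : G.E) : Prop :=
  G.IsBridge Finset.univ b ∧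
    ∃ x y : G.V, G.ends b = s(x, y) ∧
      Even (G.negOf (G.compEdges (Finset.univ.erase b) x)) ∧
      Even (G.negOf (G.compEdges (Finset.univ.erase b) y))

/-- `G` has no g-bridge (in any of its components). -/
def GBridgeless : Prop := ∀ b : G.E, ¬ G.IsGBridge b

/-- Member of `B_g(G)`: a bridge such that at least one component of `G - b`
contains an odd number of negative edges. -/
def IsBgBridge (b : G.E) : Prop :=
  G.IsBridge Finset.univ b ∧
    ∃ x : G.V, x ∈ G.ends b ∧
      ¬ Even (G.negEdges (G.compEdges (Finset.univ.erase b) x)).card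

/-- Member of `B_s(G)`: a bridge such that each of the two components of `G - b`
contains a negative edge. -/
def IsSBridge (b : G.E) : Prop :=
  G.IsBridge Finset.univ b ∧
    ∃ x y : G.V, G.ends b = s(x, y) ∧
      (G.negEdges (G.compEdges (Finset.univ.erase b) x)).Nonempty ∧
      (G.negEdges (G.compEdges (Finset.univ.erase b) y)).Nonempty

/-- `G` is s-bridgeless: every edge lies in some signed circuit. -/
def SBridgeless : Prop := ∀ e : G.E, ∃ S : Finset G.E, G.IsSignedCircuit S ∧ e ∈ S

/-- `{e, f}` is a 2-edge-cut of `G`. -/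
def IsTwoEdgeCut (e f : G.E) : Prop :=
  e ≠ f ∧ ∃ U : Finset G.V, G.boundary Finset.univ U = {e, f}

/-- `S_G(e) = {e} ∪ {f : {e,f} is a 2-edge-cut of G}`. -/
def SSet (e : G.E) : Finset G.E :=
  insert e (Finset.univ.filter fun f => G.IsTwoEdgeCut e f)

/-- The edge set `R` spans an acyclic subgraph (every nonempty subset has a
vertex of degree one). -/
def AcyclicSet (R : Finset G.E) : Prop :=
  ∀ F ⊆ R, F.Nonempty → ∃ v : G.V, G.degIn F v = 1

/-- `T` is the edge set of a spanning tree of `G`. -/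
def IsSpanningTree (T : Finset G.E) : Prop :=
  G.AcyclicSet T ∧ Nonempty G.V ∧ ∀ u v : G.V, G.Reach T u v

/-- `G` is eulerian: connected with all degrees even. -/
def Eulerian : Prop :=
  G.Connected ∧ ∀ v : G.V, Even (G.degIn Finset.univ v)

/-- The edge set `S` spans an eulerian subgraph. -/
def IsEulerianSub (S : Finset G.E) : Prop :=
  S.Nonempty ∧ G.ConnOn S ∧ ∀ v ∈ G.support S, Even (G.degIn S v)

/-- The vertex class of `v` after contracting each member of `ℬ`. -/
def classOf (ℬ : Finset (Finset G.E)) (v : G.V) : Finset G.V :=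
  Finset.univ.filter fun u => u = v ∨ ∃ B ∈ ℬ, v ∈ G.support B ∧ u ∈ G.support B

/-- Degree, in edge set `F`, of the contracted class of `v`. -/
def classDeg (ℬ : Finset (Finset G.E)) (F : Finset G.E) (v : G.V) : ℕ :=
  ∑ u ∈ G.classOf ℬ v, G.degIn F u

/-- `ℬ` witnesses that the subgraph with edge set `S` is a generalized barbell:
`ℬ` is a family of vertex-disjoint eulerian subgraphs of `S`, the contraction
`S/(∪ℬ)` is acyclic, and for every vertex `x` of the contracted graph,
`|E_N(B_x)| ≡ |δ(V(B_x))| (mod 2)`. -/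
def GenBarbellWitness (S : Finset G.E) (ℬ : Finset (Finset G.E)) : Prop :=
  (∀ B ∈ ℬ, B ⊆ S ∧ G.IsEulerianSub B) ∧
  (∀ B₁ ∈ ℬ, ∀ B₂ ∈ ℬ, B₁ ≠ B₂ → Disjoint (G.support B₁) (G.support B₂)) ∧
  (∀ F ⊆ S \ ℬ.sup id, F.Nonempty → ∃ v : G.V, G.classDeg ℬ F v = 1) ∧
  (∀ B ∈ ℬ, (G.negEdges B).card ≡ (G.boundary S (G.support B)).card [MOD 2]) ∧
  (∀ v ∈ G.support S, (∀ B ∈ ℬ, v ∉ G.support B) → Even (G.boundary S {v}).card)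

/-- The subgraph with edge set `S` is a generalized barbell. -/
def IsGenBarbell (S : Finset G.E) : Prop := ∃ ℬ, G.GenBarbellWitness S ℬ

end SignedMultigraph


namespace SignedMultigraph

variable (G : SignedMultigraph)

lemma adj_symm' {S : Finset G.E} {u v : G.V} (h : G.Adj S u v) : G.Adj S v u := by
  obtain ⟨e, he, hends⟩ := h
  exact ⟨e, he, by rw [hends, Sym2.eq_swap]⟩

lemma reach_symm {S : Finset G.E} {u v : G.V} (h : G.Reach S u v) : G.Reach S v u :=
  by
    haveI : Std.Symm (G.Adj S) := ⟨fun _ _ h => G.adj_symm' h⟩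
    exact (Std.Symm.symm (r := Relation.ReflTransGen (G.Adj S)) _ _ h)

def reachSetoid (S : Finset G.E) : Setoid G.V :=
  ⟨G.Reach S, ⟨fun _ => .refl, fun h => G.reach_symm h, fun h h' => .trans h h'⟩⟩

lemma reach_insert {S : Finset G.E} {a : G.E} {x y u v : G.V} (ha : G.ends a = s(x, y))
    (h : G.Reach (insert a S) u v) :
    G.Reach S u v ∨ (G.Reach S u x ∧ G.Reach S y v) ∨ (G.Reach S u y ∧ G.Reach S x v) := by
  induction h with
  | refl => exact Or.inl .refl
  | tail h' hadj ih =>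
    obtain ⟨f, hf, hends⟩ := hadj
    rcases Finset.mem_insert.mp hf with rfl | hfS
    · rw [ha] at hends
      rcases Sym2.eq_iff.mp hends with ⟨rfl, rfl⟩ | ⟨rfl, rfl⟩
      · rcases ih with h1 | ⟨h1, h2⟩ | ⟨h1, h2⟩
        · exact Or.inr (Or.inl ⟨h1, .refl⟩)
        · exact Or.inr (Or.inl ⟨h1, .refl⟩)
        · exact Or.inl h1
      · rcases ih with h1 | ⟨h1, h2⟩ | ⟨h1, h2⟩
        · exact Or.inr (Or.inr ⟨h1, .refl⟩)
        · exact Or.inl h1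
        · exact Or.inr (Or.inr ⟨h1, .refl⟩)
    · have hadjS : G.Adj S _ _ := ⟨f, hfS, hends⟩
      rcases ih with h1 | ⟨h1, h2⟩ | ⟨h1, h2⟩
      · exact Or.inl (h1.tail hadjS)
      · exact Or.inr (Or.inl ⟨h1, h2.tail hadjS⟩)
      · exact Or.inr (Or.inr ⟨h1, h2.tail hadjS⟩)

lemma card_le_quot_add (S : Finset G.E) :
    Fintype.card G.V ≤ Fintype.card (Quotient (G.reachSetoid S)) + S.card := by
  induction S using Finset.induction_on with
  | empty =>
    have hinj : Function.Injective (Quotient.mk (G.reachSetoid ∅)) := by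
      intro u v h
      have h' : G.Reach ∅ u v := Quotient.eq.mp h
      induction h' with
      | refl => rfl
      | tail h' hadj ih => obtain ⟨e, he, _⟩ := hadj; simp at he
    simpa using Fintype.card_le_of_injective _ hinj
  | @insert a S ha ih =>
    obtain ⟨⟨x, y⟩, hxy⟩ := Quot.exists_rep (G.ends a)
    have hxy' : G.ends a = s(x, y) := hxy.symm
    have hmono : ∀ u v, G.Reach S u v → G.Reach (insert a S) u v :=
      fun u v h => Relation.ReflTransGen.mono
        (fun u v ⟨e, he, h⟩ => ⟨e, Finset.mem_insert_of_mem he, h⟩ :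
          ∀ u v, G.Adj S u v → G.Adj (insert a S) u v) u v h
    set f : Quotient (G.reachSetoid S) → Quotient (G.reachSetoid (insert a S)) :=
      Quotient.map id (fun u v h => hmono u v h) with hf
    set c₀ : Quotient (G.reachSetoid S) := Quotient.mk _ x with hc₀
    have hcollapse : ∀ p q, f p = f q → p = q ∨ p = c₀ ∨ q = c₀ := by
      intro p q
      refine Quotient.inductionOn₂ p q (fun u v h => ?_)
      have h' : G.Reach (insert a S) u v := Quotient.eq.mp h
      rcases G.reach_insert hxy' h' with h1 | ⟨h1, h2⟩ | ⟨h1, h2⟩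
      · exact Or.inl (Quotient.sound h1)
      · exact Or.inr (Or.inl (Quotient.sound h1))
      · exact Or.inr (Or.inr (Quotient.sound (G.reach_symm h2)))
    have hinj : Set.InjOn f (Finset.univ.erase c₀ : Finset _) := by
      intro p hp q hq hfpq
      rcases hcollapse p q hfpq with h | h | h
      · exact h
      · exact absurd h (by simpa using hp)
      · exact absurd h (by simpa using hq)
    have hcard1 : Fintype.card (Quotient (G.reachSetoid S)) ≤
        Fintype.card (Quotient (G.reachSetoid (insert a S))) + 1 := by
      have h1 : (Finset.univ.erase c₀).card + 1 = Fintype.card (Quotient (G.reachSetoid S)) := by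
        rw [Finset.card_erase_add_one (Finset.mem_univ c₀), Finset.card_univ]
      have h2 : ((Finset.univ.erase c₀).image f).card = (Finset.univ.erase c₀).card :=
        Finset.card_image_of_injOn hinj
      have h3 : ((Finset.univ.erase c₀).image f).card ≤
          Fintype.card (Quotient (G.reachSetoid (insert a S))) := by
        rw [← Finset.card_univ]; exact Finset.card_le_card (Finset.subset_univ _)
      omega
    calc Fintype.card G.V ≤ Fintype.card (Quotient (G.reachSetoid S)) + S.card := ih
      _ ≤ (Fintype.card (Quotient (G.reachSetoid (insert a S))) + 1) + S.card := by omega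
      _ = Fintype.card (Quotient (G.reachSetoid (insert a S))) + (insert a S).card := by
          rw [Finset.card_insert_of_notMem ha]; omega

lemma crossesB_eq (A : Finset G.V) {e : G.E} {x y : G.V} (h : G.ends e = s(x, y)) :
    G.crossesB A e = Bool.xor (decide (x ∈ A)) (decide (y ∈ A)) := by
  rw [crossesB, h, Sym2.lift_mk]

end SignedMultigraph

/-- Let `G` be a connected signed graph with `|E_N(G)| = ε_N(G)`.
Then `G − E_N(G)` is connected; consequently `|E(G)| ≥ ε_N(G) + |V(G)| − 1`. -/
theorem deleting_negEdges_connected (G : SignedMultigraph) (hconn : G.Connected)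
    (hmin : (G.negEdges Finset.univ).card = G.negativeness) :
    (Nonempty G.V ∧
      ∀ u v : G.V, G.Reach (Finset.univ \ G.negEdges Finset.univ) u v) ∧
    G.negativeness + Fintype.card G.V ≤ Fintype.card G.E + 1 := by
  
  obtain ⟨hne, hreachAll⟩ := hconn
  set N := G.negEdges Finset.univ with hN
  set S := (Finset.univ \ N : Finset G.E) with hS
  have hSreach : ∀ u v : G.V, G.Reach S u v := by
    by_contra hcon
    push_neg at hcon
    obtain ⟨u, v, huv⟩ := hcon
    set U : Finset G.V := Finset.univ.filter (fun w => G.Reach S u w) with hU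
    have hmemU : ∀ w, w ∈ U ↔ G.Reach S u w := by intro w; simp [hU]
    have hcross_neg : ∀ e : G.E, G.crossesB U e = true → e ∈ N := by
      intro e hc
      by_contra hne'
      have heS : e ∈ S := by simp [hS, hne']
      obtain ⟨⟨x, y⟩, hxy⟩ := Quot.exists_rep (G.ends e)
      have hxy' : G.ends e = s(x, y) := hxy.symm
      rw [G.crossesB_eq U hxy'] at hc
      by_cases hx : x ∈ U <;> by_cases hy : y ∈ U <;> simp [hx, hy] at hc
      · exact hy ((hmemU y).mpr (((hmemU x).mp hx).tail ⟨e, heS, hxy'⟩))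
      · exact hx ((hmemU x).mpr (((hmemU y).mp hy).tail (G.adj_symm' ⟨e, heS, hxy'⟩)))
    have hexists : ∀ w z : G.V, G.Reach Finset.univ w z → w ∈ U → z ∉ U →
        ∃ e : G.E, G.crossesB U e = true := by
      intro w z h
      induction h with
      | refl => exact fun h1 h2 => absurd h1 h2
      | @tail b c h' hadj ih =>
        intro hw hz
        by_cases hb : b ∈ U
        · obtain ⟨e, _, hends⟩ := hadj
          exact ⟨e, by rw [G.crossesB_eq U hends]; simp [hb, hz]⟩
        · exact ih hw hb
    obtain ⟨e₀, he₀⟩ := hexists u v (hreachAll u v)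
      ((hmemU u).mpr .refl) (fun h => huv ((hmemU v).mp h))
    have he₀N : e₀ ∈ N := hcross_neg e₀ he₀
    have he₀neg : G.neg e₀ = true := by
      have := he₀N; rw [hN, SignedMultigraph.negEdges, Finset.mem_filter] at this; exact this.2
    set M := Finset.univ.filter (fun e => G.negAfter U e = true) with hM
    have hsub : M ⊆ N := by
      intro e he
      rw [hM, Finset.mem_filter] at he
      have hna := he.2
      by_cases hc : G.crossesB U e = true
      · exact hcross_neg e hc
      · rw [Bool.not_eq_true] at hc
        rw [SignedMultigraph.negAfter, hc, Bool.xor_false] at hna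
        rw [hN, SignedMultigraph.negEdges, Finset.mem_filter]
        exact ⟨Finset.mem_univ e, hna⟩
    have hne₀ : e₀ ∉ M := by
      rw [hM, Finset.mem_filter]
      rintro ⟨-, hna⟩
      rw [SignedMultigraph.negAfter, he₀neg, he₀] at hna
      simp at hna
    have hlt : M.card < N.card :=
      Finset.card_lt_card ((Finset.ssubset_iff_of_subset hsub).mpr ⟨e₀, he₀N, hne₀⟩)
    have hle : G.negativeness ≤ M.card := by
      rw [SignedMultigraph.negativeness, SignedMultigraph.negOf]
      exact Nat.sInf_le ⟨U, rfl⟩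
    omega
  refine ⟨⟨hne, hSreach⟩, ?_⟩
  have hquot : Fintype.card (Quotient (G.reachSetoid S)) ≤ 1 :=
    Fintype.card_le_one_iff.mpr (fun p q =>
      Quotient.inductionOn₂ p q (fun a b => Quotient.sound (hSreach a b)))
  have hcount := G.card_le_quot_add S
  have hcardE : S.card + N.card = Fintype.card G.E := by
    rw [← Finset.card_univ]
    exact Finset.card_sdiff_add_card_eq_card (Finset.subset_univ N)
  omega
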